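/- Let R be a commutative ring, A₀ an n×n matrix over R, and define recursively A_{m+1} = fromBlocks A_m 1 1 A_m. Then for every N, the characteristic polynomial of A_N (a matrix of size 2^N · n) equals the product over j = 0, …, N of ((charpoly A₀).comp (X - C((N : R) - 2j)))^(Nat.choose N j). Equivalently, the eigenvalues of A_N are exactly the numbers λ + N - 2j for λ an eigenvalue of A₀ and 0 ≤ j ≤ N, where the multiplicity of the shift by N - 2j is binomial(N, j) times the multiplicity of λ. -/

import Mathlib

open Polynomial

/-- The index type of the `N`-fold iterated graph cylinder matrix over base index `V`. -/
def CylIdx (V : Type*) : ℕ → Type _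
  | 0 => V
  | N + 1 => CylIdx V N ⊕ CylIdx V N

instance instFintypeCylIdx (V : Type*) [Fintype V] : ∀ N, Fintype (CylIdx V N)
  | 0 => ‹Fintype V›
  | N + 1 => letI := instFintypeCylIdx V N
             inferInstanceAs (Fintype (CylIdx V N ⊕ CylIdx V N))

instance instDecidableEqCylIdx (V : Type*) [DecidableEq V] : ∀ N, DecidableEq (CylIdx V N)
  | 0 => ‹DecidableEq V›
  | N + 1 => letI := instDecidableEqCylIdx V N
             inferInstanceAs (DecidableEq (CylIdx V N ⊕ CylIdx V N))

/-- The iterated graph cylinder matrices: `A_{m+1} = [[A_m, I], [I, A_m]]`. -/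
def iterCyl {V : Type*} [DecidableEq V] {R : Type*} [CommRing R] (A₀ : Matrix V V R) :
    ∀ N : ℕ, Matrix (CylIdx V N) (CylIdx V N) R
  | 0 => A₀
  | N + 1 => Matrix.fromBlocks (iterCyl A₀ N) 1 1 (iterCyl A₀ N)


section aux
open Matrix
variable {R : Type*} [CommRing R] {m : Type*} [Fintype m] [DecidableEq m]

lemma det_fromBlocks_symm (P Q : Matrix m m R) :
    (Matrix.fromBlocks P Q Q P).det = (P + Q).det * (P - Q).det := by
  have h : Matrix.fromBlocks P Q Q P =
      Matrix.fromBlocks 1 (-1) 0 1 *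
        (Matrix.fromBlocks (P + Q) 0 Q (P - Q) * Matrix.fromBlocks 1 1 0 1) := by
    rw [Matrix.fromBlocks_multiply, Matrix.fromBlocks_multiply, Matrix.fromBlocks_inj]
    refine ⟨by noncomm_ring, by noncomm_ring, by noncomm_ring, by noncomm_ring⟩
  rw [h, det_mul, det_mul, Matrix.det_fromBlocks_zero₂₁, Matrix.det_fromBlocks_zero₂₁,
    Matrix.det_fromBlocks_zero₁₂, det_one]
  ring

lemma charpoly_add_smul_one (A : Matrix m m R) (c : R) :
    (A + c • 1).charpoly = A.charpoly.comp (X - C c) := by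
  have hcomp : A.charpoly.comp (X - C c) = eval₂ C (X - C c) A.charpoly := rfl
  rw [hcomp, show (eval₂ C (X - C c) A.charpoly) =
      (eval₂RingHom C (X - C c)) A.charpoly from rfl]
  unfold Matrix.charpoly
  rw [RingHom.map_det]
  congr 1
  ext i j
  rw [RingHom.mapMatrix_apply]
  by_cases h : i = j
  · subst h
    simp [charmatrix_apply_eq, Matrix.add_apply, Matrix.smul_apply, Matrix.one_apply]
    ring
  · simp [charmatrix_apply_ne _ _ _ h, Matrix.add_apply, Matrix.smul_apply, Matrix.one_apply, h]

lemma charpoly_cyl_step (A : Matrix m m R) :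
    (Matrix.fromBlocks A 1 1 A).charpoly = (A + 1).charpoly * (A - 1).charpoly := by
  unfold Matrix.charpoly
  rw [charmatrix_fromBlocks, det_fromBlocks_symm]
  have h1 : charmatrix A + -(1 : Matrix m m R).map C = charmatrix (A + 1) := by
    ext i j
    by_cases h : i = j <;>
      simp [h, charmatrix_apply_eq, charmatrix_apply_ne, Matrix.add_apply, Matrix.one_apply] <;>
      ring
  have h2 : charmatrix A - -(1 : Matrix m m R).map C = charmatrix (A - 1) := by
    ext i j
    by_cases h : i = j <;>
      simp [h, charmatrix_apply_eq, charmatrix_apply_ne, Matrix.sub_apply, Matrix.one_apply] <;>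
      ring
  rw [h1, h2]

lemma pascal_prod {M : Type*} [CommMonoid M] (g : ℕ → M) (n : ℕ) :
    ∏ j ∈ Finset.range (n + 2), g j ^ (n + 1).choose j =
      (∏ j ∈ Finset.range (n + 1), g j ^ n.choose j) *
        ∏ j ∈ Finset.range (n + 1), g (j + 1) ^ n.choose j := by
  rw [Finset.prod_range_succ' (fun j => g j ^ (n + 1).choose j) (n + 1)]
  have : ∀ j, g (j + 1) ^ (n + 1).choose (j + 1) =
      g (j + 1) ^ n.choose j * g (j + 1) ^ n.choose (j + 1) := by
    intro j; rw [Nat.choose_succ_succ, pow_add]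
  rw [Finset.prod_congr rfl fun j _ => this j, Finset.prod_mul_distrib]
  rw [mul_assoc]
  have h2 : (∏ j ∈ Finset.range (n + 1), g (j + 1) ^ n.choose (j + 1)) *
      g 0 ^ (n + 1).choose 0 = ∏ j ∈ Finset.range (n + 1), g j ^ n.choose j := by
    rw [show (n + 1).choose 0 = n.choose 0 by simp,
      ← Finset.prod_range_succ' (fun j => g j ^ n.choose j) (n + 1),
      Finset.prod_range_succ, Nat.choose_succ_self, pow_zero, mul_one]
  rw [h2, mul_comm]

end aux

lemma comp_shift {R : Type*} [CommRing R] (p : R[X]) (a b : R) :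
    (p.comp (X - C a)).comp (X - C b) = p.comp (X - C (a + b)) := by
  rw [Polynomial.comp_assoc]
  congr 1
  simp only [sub_comp, X_comp, C_comp, C_add]
  ring

theorem iterCyl_charpoly {R : Type*} [CommRing R] {n : ℕ}
    (A₀ : Matrix (Fin n) (Fin n) R) (N : ℕ) :
    (iterCyl A₀ N).charpoly =
      ∏ j ∈ Finset.range (N + 1),
        (A₀.charpoly.comp (X - C ((N : R) - 2 * (j : R)))) ^ (N.choose j) := by
  induction N with
  | zero => simp [iterCyl]; rfl
  | succ N ih =>
    have hu : iterCyl A₀ (N + 1) =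
        Matrix.fromBlocks (iterCyl A₀ N) 1 1 (iterCyl A₀ N) := rfl
    rw [show (iterCyl A₀ (N + 1)).charpoly =
        (Matrix.fromBlocks (iterCyl A₀ N) 1 1 (iterCyl A₀ N)).charpoly from rfl, charpoly_cyl_step,
      show iterCyl A₀ N + 1 = iterCyl A₀ N + (1 : R) • 1 by rw [one_smul],
      show iterCyl A₀ N - 1 = iterCyl A₀ N + (-1 : R) • 1 by
        rw [neg_smul, one_smul, sub_eq_add_neg],
      charpoly_add_smul_one, charpoly_add_smul_one, ih]
    have hmap : ∀ c : R,
        (∏ j ∈ Finset.range (N + 1),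
            (A₀.charpoly.comp (X - C ((N : R) - 2 * (j : R)))) ^ (N.choose j)).comp (X - C c) =
          ∏ j ∈ Finset.range (N + 1),
            (A₀.charpoly.comp (X - C ((N : R) - 2 * (j : R) + c))) ^ (N.choose j) := by
      intro c
      have : ∀ p : R[X], p.comp (X - C c) = (eval₂RingHom C (X - C c)) p := fun _ => rfl
      rw [this, map_prod]
      refine Finset.prod_congr rfl fun j _ => ?_
      rw [map_pow, ← this, comp_shift]
    rw [hmap, hmap]
    have e1 : ∀ j : ℕ, (N : R) - 2 * (j : R) + 1 = (N : R) + 1 - 2 * (j : R) :=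
      fun j => by ring
    have e2 : ∀ j : ℕ, (N : R) - 2 * (j : R) + -1 = (N : R) + 1 - 2 * ((j + 1 : ℕ) : R) :=
      fun j => by push_cast; ring
    have e3 : ∀ j : ℕ, ((N + 1 : ℕ) : R) - 2 * (j : R) = (N : R) + 1 - 2 * (j : R) :=
      fun j => by push_cast; ring
    simp only [e1, e2, e3]
    exact (pascal_prod (fun j => A₀.charpoly.comp (X - C ((N : R) + 1 - 2 * (j : R)))) N).symm
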